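/- If the kernel K is nonnegative (λ(S₋)=0), then I_x(0⃗,0) = g(x)·λ(S₊), where S₊ = {z : K(z) > 0}, and I_x(t₁,0) = +∞ for every t₁ ≠ 0⃗. -/

import Mathlib

open MeasureTheory Real ENNReal Filter Topology

private lemma exp_sub_one_le' (t : ℝ) : Real.exp t - 1 ≤ t * Real.exp t := by
  have h := Real.add_one_le_exp (-t)
  have h2 : (-t + 1) * Real.exp t ≤ Real.exp (-t) * Real.exp t :=
    mul_le_mul_of_nonneg_right h (Real.exp_pos t).le
  rw [← Real.exp_add, neg_add_cancel, Real.exp_zero] at h2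
  nlinarith

private lemma one_sub_exp_neg_le' (t : ℝ) : 1 - Real.exp (-t) ≤ t := by
  have := Real.add_one_le_exp (-t); linarith

private lemma sup_ofReal_top {ι : Type*} (F : ι → ℝ≥0∞)
    (h : ∀ C : ℝ, ∃ i, ENNReal.ofReal C ≤ F i) : (⨆ i, F i) = ⊤ := by
  by_contra hne
  obtain ⟨i, hi⟩ := h ((⨆ i, F i).toReal + 1)
  have h1 : F i ≤ ⨆ i, F i := le_iSup _ i
  have h3 : (⨆ i, F i) < ENNReal.ofReal ((⨆ i, F i).toReal + 1) := by
    rw [ENNReal.lt_ofReal_iff_toReal_lt hne]; linarith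
  exact absurd (hi.trans h1) (not_le.2 h3)

/-- Key lemma for part 2: along `v = -n`, the moment functional `Ψ(u, -n)` is eventually `≤ 1`. -/
private lemma psi_small {d q : ℕ} {K : EuclideanSpace ℝ (Fin d) → ℝ}
    {F : EuclideanSpace ℝ (Fin q) → ℝ} {u : EuclideanSpace ℝ (Fin q)} {M : ℝ}
    (hKnn : ∀ z, 0 ≤ K z) (hM0 : 0 ≤ M) (hKM : ∀ z, K z ≤ M)
    (hKint : Integrable K) (hK1 : ∫ z, K z = 1)
    (hFnn : ∀ y, 0 ≤ F y)
    (hmom : Integrable (fun y : EuclideanSpace ℝ (Fin q) =>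
      ‖y‖ * Real.exp (M * ‖u‖ * ‖y‖) * F y))
    (hint : ∀ n : ℕ, Integrable (fun p : EuclideanSpace ℝ (Fin d) × EuclideanSpace ℝ (Fin q) =>
      (Real.exp (((inner ℝ u p.2 : ℝ) + -(n:ℝ)) * K p.1) - 1) * F p.2)) :
    ∃ n : ℕ, (∫ p : EuclideanSpace ℝ (Fin d) × EuclideanSpace ℝ (Fin q),
      (Real.exp (((inner ℝ u p.2 : ℝ) + -(n:ℝ)) * K p.1) - 1) * F p.2) ≤ 1 := by
  set s : ℕ → Set (EuclideanSpace ℝ (Fin q)) := fun n => {y | (n:ℝ) < (inner ℝ u y : ℝ)} with hs_def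
  set h : EuclideanSpace ℝ (Fin q) → ℝ := fun y => ‖u‖ * (‖y‖ * Real.exp (M * ‖u‖ * ‖y‖) * F y)
    with hh_def
  have hsmeas : ∀ n, MeasurableSet (s n) := fun n =>
    measurableSet_lt measurable_const ((continuous_const.inner continuous_id).measurable)
  have h_int : Integrable h := hmom.const_mul _
  have h_nn : ∀ y, 0 ≤ h y := fun y => by
    have := hFnn y
    have : (0:ℝ) ≤ ‖y‖ * Real.exp (M * ‖u‖ * ‖y‖) * F y := by positivity
    positivity
  have hn_int : ∀ n, Integrable ((s n).indicator h) := fun n => h_int.indicator (hsmeas n)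
  have bound : ∀ n : ℕ, ∀ p : EuclideanSpace ℝ (Fin d) × EuclideanSpace ℝ (Fin q),
      (Real.exp (((inner ℝ u p.2 : ℝ) + -(n:ℝ)) * K p.1) - 1) * F p.2
        ≤ K p.1 * (s n).indicator h p.2 := by
    intro n p
    by_cases hc : (inner ℝ u p.2 : ℝ) ≤ (n:ℝ)
    · have hmem : p.2 ∉ s n := by simp only [hs_def, Set.mem_setOf_eq, not_lt]; exact hc
      rw [Set.indicator_of_notMem hmem, mul_zero]
      have hexp : ((inner ℝ u p.2 : ℝ) + -(n:ℝ)) * K p.1 ≤ 0 :=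
        mul_nonpos_iff.2 (Or.inr ⟨by linarith, hKnn _⟩)
      have := Real.exp_le_one_iff.2 hexp
      exact mul_nonpos_iff.2 (Or.inr ⟨by linarith, hFnn _⟩)
    · push_neg at hc
      have hmem : p.2 ∈ s n := hc
      rw [Set.indicator_of_mem hmem]
      set c := (inner ℝ u p.2 : ℝ) with hc_def
      have hc0 : (0:ℝ) ≤ c := le_trans (Nat.cast_nonneg n) hc.le
      have hK0 := hKnn p.1
      have hKM' := hKM p.1
      have h1 : Real.exp ((c + -(n:ℝ)) * K p.1) - 1 ≤ Real.exp (c * K p.1) - 1 := by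
        have : (c + -(n:ℝ)) * K p.1 ≤ c * K p.1 :=
          mul_le_mul_of_nonneg_right (by linarith [Nat.cast_nonneg (α := ℝ) n]) hK0
        linarith [Real.exp_le_exp.2 this]
      have h2 := exp_sub_one_le' (c * K p.1)
      have hcy : c ≤ ‖u‖ * ‖p.2‖ := real_inner_le_norm u p.2
      have h3 : c * K p.1 ≤ ‖u‖ * ‖p.2‖ * K p.1 := mul_le_mul_of_nonneg_right hcy hK0
      have h4 : c * K p.1 ≤ M * ‖u‖ * ‖p.2‖ := by nlinarith
      have h5 : (c * K p.1) * Real.exp (c * K p.1)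
          ≤ (‖u‖ * ‖p.2‖ * K p.1) * Real.exp (M * ‖u‖ * ‖p.2‖) := by
        apply mul_le_mul h3 (Real.exp_le_exp.2 h4) (Real.exp_pos _).le
        positivity
      have h6 : Real.exp ((c + -(n:ℝ)) * K p.1) - 1
          ≤ (‖u‖ * ‖p.2‖ * K p.1) * Real.exp (M * ‖u‖ * ‖p.2‖) := by linarith
      calc (Real.exp ((c + -(n:ℝ)) * K p.1) - 1) * F p.2
          ≤ ((‖u‖ * ‖p.2‖ * K p.1) * Real.exp (M * ‖u‖ * ‖p.2‖)) * F p.2 :=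
            mul_le_mul_of_nonneg_right h6 (hFnn _)
        _ = K p.1 * h p.2 := by simp only [hh_def]; ring
  have step : ∀ n : ℕ, (∫ p : EuclideanSpace ℝ (Fin d) × EuclideanSpace ℝ (Fin q),
      (Real.exp (((inner ℝ u p.2 : ℝ) + -(n:ℝ)) * K p.1) - 1) * F p.2)
        ≤ ∫ y, (s n).indicator h y := by
    intro n
    have hR : Integrable (fun p : EuclideanSpace ℝ (Fin d) × EuclideanSpace ℝ (Fin q) =>
        K p.1 * (s n).indicator h p.2) := by
      rw [Measure.volume_eq_prod]
      exact hKint.mul_prod (hn_int n)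
    calc (∫ p : EuclideanSpace ℝ (Fin d) × EuclideanSpace ℝ (Fin q),
        (Real.exp (((inner ℝ u p.2 : ℝ) + -(n:ℝ)) * K p.1) - 1) * F p.2)
        ≤ ∫ p : EuclideanSpace ℝ (Fin d) × EuclideanSpace ℝ (Fin q),
            K p.1 * (s n).indicator h p.2 := integral_mono (hint n) hR (bound n)
      _ = (∫ z, K z) * ∫ y, (s n).indicator h y := by
            rw [Measure.volume_eq_prod]; exact integral_prod_mul K ((s n).indicator h)
      _ = ∫ y, (s n).indicator h y := by rw [hK1, one_mul]
  have htend : Tendsto (fun n : ℕ => ∫ y, (s n).indicator h y) atTop (𝓝 0) := by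
    have h0 : (0:ℝ) = ∫ y : EuclideanSpace ℝ (Fin q), (0:ℝ) := by simp
    rw [h0]
    apply tendsto_integral_of_dominated_convergence h
    · intro n; exact (hn_int n).aestronglyMeasurable
    · exact h_int
    · intro n
      refine ae_of_all _ fun y => ?_
      by_cases hy : y ∈ s n
      · rw [Set.indicator_of_mem hy, Real.norm_eq_abs, abs_of_nonneg (h_nn y)]
      · rw [Set.indicator_of_notMem hy]; simpa using h_nn y
    · refine ae_of_all _ fun y => ?_
      have hev : ∀ᶠ n : ℕ in atTop, (s n).indicator h y = 0 := by
        obtain ⟨N, hN⟩ := exists_nat_ge (inner ℝ u y : ℝ)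
        filter_upwards [eventually_ge_atTop N] with n hn
        refine Set.indicator_of_notMem ?_ _
        simp only [hs_def, Set.mem_setOf_eq, not_lt]
        exact hN.trans (by exact_mod_cast hn)
      exact Tendsto.congr' (hev.mono fun n h => h.symm) tendsto_const_nhds
  have : ∀ᶠ n : ℕ in atTop, (∫ y, (s n).indicator h y) < 1 :=
    htend.eventually_lt_const one_pos
  obtain ⟨n, hn⟩ := this.exists
  exact ⟨n, (step n).trans hn.le⟩

private lemma stmt6_part2 (d q : ℕ)
    (K : EuclideanSpace ℝ (Fin d) → ℝ)
    (f : EuclideanSpace ℝ (Fin d) → EuclideanSpace ℝ (Fin q) → ℝ)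
    (x : EuclideanSpace ℝ (Fin d))
    (hKbdd : ∃ M : ℝ, ∀ z, |K z| ≤ M)
    (hKint : Integrable K) (hK1 : ∫ z, K z = 1)
    (hKnn : ∀ z, 0 ≤ K z)
    (hfnn : ∀ y, 0 ≤ f x y)
    (hmom : ∀ (m ρ : ℝ), 0 ≤ m → 0 ≤ ρ →
      Integrable (fun y : EuclideanSpace ℝ (Fin q) =>
        ‖y‖ ^ m * Real.exp (ρ * ‖y‖) * f x y))
    (hint : ∀ (u : EuclideanSpace ℝ (Fin q)) (v : ℝ),
      Integrable (fun p : EuclideanSpace ℝ (Fin d) × EuclideanSpace ℝ (Fin q) =>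
        (Real.exp (((inner ℝ u p.2 : ℝ) + v) * K p.1) - 1) * f x p.2)) :
    ∀ t₁ : EuclideanSpace ℝ (Fin q), t₁ ≠ 0 →
      (⨆ w : EuclideanSpace ℝ (Fin q) × ℝ,
        ENNReal.ofReal ((inner ℝ w.1 t₁ : ℝ) + w.2 * 0 -
          ∫ p : EuclideanSpace ℝ (Fin d) × EuclideanSpace ℝ (Fin q),
            (Real.exp (((inner ℝ w.1 p.2 : ℝ) + w.2) * K p.1) - 1) * f x p.2)) = ⊤ := by
  intro t₁ ht₁
  obtain ⟨M', hM'⟩ := hKbdd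
  have hM0 : (0:ℝ) ≤ max M' 0 := le_max_right _ _
  have hKM : ∀ z, K z ≤ max M' 0 := fun z =>
    ((le_abs_self _).trans (hM' z)).trans (le_max_left _ _)
  apply sup_ofReal_top
  intro C
  set u : EuclideanSpace ℝ (Fin q) := ((|C| + 1) / ‖t₁‖^2) • t₁ with hu
  have hmom' : Integrable (fun y : EuclideanSpace ℝ (Fin q) =>
      ‖y‖ * Real.exp ((max M' 0) * ‖u‖ * ‖y‖) * f x y) := by
    have := hmom 1 ((max M' 0) * ‖u‖) zero_le_one (by positivity)
    simpa [Real.rpow_one] using this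
  obtain ⟨n, hn⟩ := psi_small (u := u) hKnn hM0 hKM hKint hK1 hfnn hmom'
    (fun n => hint u (-(n:ℝ)))
  refine ⟨(u, -(n:ℝ)), ?_⟩
  apply ENNReal.ofReal_le_ofReal
  have ht0 : ‖t₁‖ ≠ 0 := norm_ne_zero_iff.2 ht₁
  have hip : (inner ℝ u t₁ : ℝ) = |C| + 1 := by
    rw [hu, real_inner_smul_left, real_inner_self_eq_norm_sq]
    exact div_mul_cancel₀ _ (pow_ne_zero 2 ht0)
  simp only [hip]
  have hC := le_abs_self C
  linarith

private lemma stmt6_part1 (d q : ℕ)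
    (K : EuclideanSpace ℝ (Fin d) → ℝ)
    (f : EuclideanSpace ℝ (Fin d) → EuclideanSpace ℝ (Fin q) → ℝ)
    (x : EuclideanSpace ℝ (Fin d))
    (hKmeas : Measurable K)
    (hKint : Integrable K)
    (hKnn : ∀ z, 0 ≤ K z)
    (hfnn : ∀ y, 0 ≤ f x y)
    (hfprob : ∫ y, f x y = 1)
    (hint : ∀ (u : EuclideanSpace ℝ (Fin q)) (v : ℝ),
      Integrable (fun p : EuclideanSpace ℝ (Fin d) × EuclideanSpace ℝ (Fin q) =>
        (Real.exp (((inner ℝ u p.2 : ℝ) + v) * K p.1) - 1) * f x p.2)) :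
    (⨆ w : EuclideanSpace ℝ (Fin q) × ℝ,
        ENNReal.ofReal ((inner ℝ w.1 (0 : EuclideanSpace ℝ (Fin q)) : ℝ) + w.2 * 0 -
          ∫ p : EuclideanSpace ℝ (Fin d) × EuclideanSpace ℝ (Fin q),
            (Real.exp (((inner ℝ w.1 p.2 : ℝ) + w.2) * K p.1) - 1) * f x p.2))
      = volume {z | 0 < K z} := by
  have hSmeas : MeasurableSet {z | 0 < K z} := measurableSet_lt measurable_const hKmeas
  have hf_int : Integrable (f x) := by
    by_contra hni
    rw [integral_undef hni] at hfprob; norm_num at hfprob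
  have hpz : ∀ v : ℝ,
      (∫ p : EuclideanSpace ℝ (Fin d) × EuclideanSpace ℝ (Fin q),
        (Real.exp (((inner ℝ (0 : EuclideanSpace ℝ (Fin q)) p.2 : ℝ) + v) * K p.1) - 1) * f x p.2)
        = ∫ z, (Real.exp (v * K z) - 1) := by
    intro v
    have heq : (fun p : EuclideanSpace ℝ (Fin d) × EuclideanSpace ℝ (Fin q) =>
        (Real.exp (((inner ℝ (0 : EuclideanSpace ℝ (Fin q)) p.2 : ℝ) + v) * K p.1) - 1) * f x p.2)
        = fun p => (fun z => Real.exp (v * K z) - 1) p.1 * f x p.2 := by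
      funext p; simp
    rw [heq, Measure.volume_eq_prod,
      integral_prod_mul (fun z => Real.exp (v * K z) - 1) (f x), hfprob, mul_one]
  rcases eq_top_or_lt_top (volume {z | 0 < K z}) with hfin | hfin
  · -- infinite measure case
    rw [hfin]
    apply sup_ofReal_top
    intro C
    set A : ℕ → Set (EuclideanSpace ℝ (Fin d)) :=
      fun k => {z | 1/((k:ℝ)+1) ≤ K z} ∩ Metric.ball 0 ((k:ℝ)+1) with hA_def
    have hAmeas : ∀ k, MeasurableSet (A k) := fun k =>
      (measurableSet_le measurable_const hKmeas).inter measurableSet_ball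
    have hAmono : Monotone A := by
      intro k l hkl
      have hkl' : (k:ℝ) + 1 ≤ (l:ℝ) + 1 := by exact_mod_cast Nat.succ_le_succ hkl
      apply Set.inter_subset_inter
      · intro z hz
        exact le_trans (one_div_le_one_div_of_le (by positivity) hkl') hz
      · exact Metric.ball_subset_ball hkl'
    have hAunion : (⋃ k, A k) = {z | 0 < K z} := by
      ext z
      simp only [Set.mem_iUnion, hA_def, Set.mem_inter_iff, Set.mem_setOf_eq, Metric.mem_ball]
      constructor
      · rintro ⟨k, h1, _⟩
        exact lt_of_lt_of_le (by positivity) h1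
      · intro hz
        obtain ⟨k1, hk1⟩ := exists_nat_one_div_lt hz
        obtain ⟨k2, hk2⟩ := exists_nat_gt (dist z (0 : EuclideanSpace ℝ (Fin d)))
        refine ⟨max k1 k2, ?_, ?_⟩
        · refine le_trans (le_of_lt (lt_of_le_of_lt ?_ hk1)) (le_refl _)
          apply one_div_le_one_div_of_le (by positivity)
          have : (k1:ℝ) ≤ ((max k1 k2 : ℕ) : ℝ) := by exact_mod_cast le_max_left k1 k2
          linarith
        · have h2 : (k2:ℝ) ≤ ((max k1 k2 : ℕ) : ℝ) := by exact_mod_cast le_max_right k1 k2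
          linarith
    have hsup : (⨆ k, volume (A k)) = ⊤ := by
      rw [← hAmono.measure_iUnion, hAunion, hfin]
    have hlt : ENNReal.ofReal (2*|C|+2) < ⨆ k, volume (A k) := by
      rw [hsup]; exact ofReal_lt_top
    obtain ⟨k, hk⟩ := lt_iSup_iff.1 hlt
    have hAfin : volume (A k) < ⊤ :=
      lt_of_le_of_lt (measure_mono Set.inter_subset_right) measure_ball_lt_top
    have hb : 2*|C|+2 ≤ (volume (A k)).toReal :=
      (ENNReal.ofReal_le_iff_le_toReal hAfin.ne).1 hk.le
    set n : ℕ := k + 1 with hn_def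
    set φ : EuclideanSpace ℝ (Fin d) → ℝ := fun z => 1 - Real.exp (-(n:ℝ) * K z) with hφ
    have hφnn : ∀ z, 0 ≤ φ z := by
      intro z
      have h1 : (-(n:ℝ)) * K z ≤ 0 :=
        mul_nonpos_iff.2 (Or.inr ⟨by simp, hKnn z⟩)
      have := Real.exp_le_one_iff.2 h1
      simp only [hφ]; linarith
    have hφmeas : Measurable φ := measurable_const.sub (hKmeas.const_mul _).exp
    have hφint : Integrable φ := by
      apply Integrable.mono' (hKint.const_mul (n:ℝ)) hφmeas.aestronglyMeasurable
      refine ae_of_all _ fun z => ?_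
      rw [Real.norm_eq_abs, abs_of_nonneg (hφnn z)]
      have := one_sub_exp_neg_le' ((n:ℝ) * K z)
      simp only [hφ, neg_mul] at *
      linarith
    have hhalf : ∀ z ∈ A k, 1/2 ≤ φ z := by
      intro z hz
      have hδ : 1/((k:ℝ)+1) ≤ K z := hz.1
      have hkpos : (0:ℝ) < (k:ℝ) + 1 := by positivity
      have hnk : ((n:ℕ):ℝ) = (k:ℝ) + 1 := by rw [hn_def]; push_cast; ring
      have h1 : -(n:ℝ) * K z ≤ -1 := by
        have h2 : (n:ℝ) * (1/((k:ℝ)+1)) = 1 := by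
          rw [hnk]; field_simp
        nlinarith
      have h2 : Real.exp (-(n:ℝ) * K z) ≤ Real.exp (-1) := Real.exp_le_exp.2 h1
      have h3 : Real.exp (-1:ℝ) ≤ 1/2 := by
        rw [Real.exp_neg, inv_eq_one_div]
        have h2e : (2:ℝ) ≤ Real.exp 1 := by
          have := Real.add_one_le_exp (1:ℝ); linarith
        exact one_div_le_one_div_of_le two_pos h2e
      simp only [hφ]; linarith
    have hint1 : 1/2 * (volume (A k)).toReal ≤ ∫ z in A k, φ z :=
      setIntegral_ge_of_const_le_real (hAmeas k) hAfin.ne hhalf hφint.integrableOn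
    have hint2 : (∫ z in A k, φ z) ≤ ∫ z, φ z :=
      setIntegral_le_integral hφint (ae_of_all _ hφnn)
    refine ⟨((0 : EuclideanSpace ℝ (Fin q)), -(n:ℝ)), ?_⟩
    apply ENNReal.ofReal_le_ofReal
    have hJ : (∫ p : EuclideanSpace ℝ (Fin d) × EuclideanSpace ℝ (Fin q),
        (Real.exp (((inner ℝ (0 : EuclideanSpace ℝ (Fin q)) p.2 : ℝ) + -(n:ℝ)) * K p.1) - 1)
          * f x p.2) = -∫ z, φ z := by
      rw [hpz (-(n:ℝ)), ← integral_neg]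
      congr 1; funext z; simp only [hφ]; ring
    simp only [hJ, inner_zero_right]
    have hC := le_abs_self C
    have htR : (0:ℝ) ≤ (volume (A k)).toReal := ENNReal.toReal_nonneg
    linarith
  · -- finite measure case
    set m := (volume {z | 0 < K z}).toReal with hm
    have hub : ∀ w : (EuclideanSpace ℝ (Fin q)) × ℝ,
        (-m) ≤ ∫ p : EuclideanSpace ℝ (Fin d) × EuclideanSpace ℝ (Fin q),
          (Real.exp (((inner ℝ w.1 p.2 : ℝ) + w.2) * K p.1) - 1) * f x p.2 := by
      intro w
      have hGone : Integrable (fun z => Set.indicator {z | 0 < K z} (fun _ => (-1:ℝ)) z) :=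
        (integrableOn_const hfin.ne).integrable_indicator hSmeas
      have hGint : Integrable (fun p : EuclideanSpace ℝ (Fin d) × EuclideanSpace ℝ (Fin q) =>
          Set.indicator {z | 0 < K z} (fun _ => (-1:ℝ)) p.1 * f x p.2) := by
        rw [Measure.volume_eq_prod]; exact hGone.mul_prod hf_int
      have hGle : ∀ p : EuclideanSpace ℝ (Fin d) × EuclideanSpace ℝ (Fin q),
          Set.indicator {z | 0 < K z} (fun _ => (-1:ℝ)) p.1 * f x p.2
            ≤ (Real.exp (((inner ℝ w.1 p.2 : ℝ) + w.2) * K p.1) - 1) * f x p.2 := by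
        intro p
        by_cases hz : 0 < K p.1
        · rw [Set.indicator_of_mem (show p.1 ∈ {z | 0 < K z} from hz)]
          have := Real.exp_pos (((inner ℝ w.1 p.2 : ℝ) + w.2) * K p.1)
          apply mul_le_mul_of_nonneg_right _ (hfnn p.2)
          linarith
        · have hz0 : K p.1 = 0 := le_antisymm (not_lt.1 hz) (hKnn p.1)
          rw [Set.indicator_of_notMem (show p.1 ∉ {z | 0 < K z} from hz), hz0]
          simp
      have h1 := integral_mono hGint (hint w.1 w.2) hGle
      have h2 : (∫ p : EuclideanSpace ℝ (Fin d) × EuclideanSpace ℝ (Fin q),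
          Set.indicator {z | 0 < K z} (fun _ => (-1:ℝ)) p.1 * f x p.2) = -m := by
        rw [Measure.volume_eq_prod, integral_prod_mul, hfprob, mul_one,
          integral_indicator_const (-1:ℝ) hSmeas]
        simp [hm, Measure.real]
      rw [h2] at h1
      exact h1
    apply le_antisymm
    · apply iSup_le
      intro w
      rw [← ENNReal.ofReal_toReal hfin.ne]
      apply ENNReal.ofReal_le_ofReal
      have := hub w
      rw [inner_zero_right]
      linarith
    · -- lower bound
      have hDCT : Tendsto (fun n : ℕ => ∫ z, (Real.exp (-(n:ℝ) * K z) - 1)) atTop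
          (𝓝 (∫ z, -(Set.indicator {z | 0 < K z} (fun _ => (1:ℝ)) z))) := by
        apply tendsto_integral_of_dominated_convergence
          (Set.indicator {z | 0 < K z} (fun _ => (1:ℝ)))
        · intro n
          exact ((hKmeas.const_mul _).exp.sub measurable_const).aestronglyMeasurable
        · exact (integrableOn_const hfin.ne).integrable_indicator hSmeas
        · intro n
          refine ae_of_all _ fun z => ?_
          by_cases hz : 0 < K z
          · rw [Set.indicator_of_mem (show z ∈ {z' | 0 < K z'} from hz)]
            have h1 : Real.exp (-(n:ℝ) * K z) ≤ 1 :=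
              Real.exp_le_one_iff.2 (mul_nonpos_iff.2 (Or.inr ⟨by simp, hKnn z⟩))
            have h2 := Real.exp_pos (-(n:ℝ) * K z)
            rw [Real.norm_eq_abs, abs_le]; constructor <;> linarith
          · have hz0 : K z = 0 := le_antisymm (not_lt.1 hz) (hKnn z)
            rw [Set.indicator_of_notMem (show z ∉ {z' | 0 < K z'} from hz), hz0]
            simp
        · refine ae_of_all _ fun z => ?_
          by_cases hz : 0 < K z
          · rw [Set.indicator_of_mem (show z ∈ {z' | 0 < K z'} from hz)]
            have hlim : Tendsto (fun nn : ℕ => Real.exp (-(nn:ℝ) * K z)) atTop (𝓝 0) := by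
              have heq : ∀ nn : ℕ, Real.exp (-(nn:ℝ) * K z) = (Real.exp (-K z))^nn := by
                intro nn
                rw [show -(nn:ℝ) * K z = (nn:ℝ) * (-K z) by ring, Real.exp_nat_mul]
              have := tendsto_pow_atTop_nhds_zero_of_lt_one (Real.exp_pos (-K z)).le
                (Real.exp_lt_one_iff.2 (by linarith))
              exact this.congr fun nn => (heq nn).symm
            simpa using hlim.sub_const 1
          · have hz0 : K z = 0 := le_antisymm (not_lt.1 hz) (hKnn z)
            rw [Set.indicator_of_notMem (show z ∉ {z' | 0 < K z'} from hz), hz0]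
            simp
      have hIlim : (∫ z, -(Set.indicator {z | 0 < K z} (fun _ => (1:ℝ)) z)) = -m := by
        rw [integral_neg, integral_indicator_const (1:ℝ) hSmeas]
        simp [hm, Measure.real]
      rw [hIlim] at hDCT
      have htt : Tendsto (fun n : ℕ => ENNReal.ofReal
          ((inner ℝ ((0 : EuclideanSpace ℝ (Fin q)), -(n:ℝ)).1
              (0 : EuclideanSpace ℝ (Fin q)) : ℝ) + ((0 : EuclideanSpace ℝ (Fin q)), -(n:ℝ)).2 * 0 -
            ∫ p : EuclideanSpace ℝ (Fin d) × EuclideanSpace ℝ (Fin q),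
              (Real.exp (((inner ℝ ((0 : EuclideanSpace ℝ (Fin q)), -(n:ℝ)).1 p.2 : ℝ)
                + ((0 : EuclideanSpace ℝ (Fin q)), -(n:ℝ)).2) * K p.1) - 1) * f x p.2))
          atTop (𝓝 (ENNReal.ofReal m)) := by
        apply ENNReal.tendsto_ofReal
        have heq : ∀ nn : ℕ,
            ((inner ℝ ((0 : EuclideanSpace ℝ (Fin q)), -(nn:ℝ)).1
              (0 : EuclideanSpace ℝ (Fin q)) : ℝ) + ((0 : EuclideanSpace ℝ (Fin q)), -(nn:ℝ)).2 * 0 -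
            ∫ p : EuclideanSpace ℝ (Fin d) × EuclideanSpace ℝ (Fin q),
              (Real.exp (((inner ℝ ((0 : EuclideanSpace ℝ (Fin q)), -(nn:ℝ)).1 p.2 : ℝ)
                + ((0 : EuclideanSpace ℝ (Fin q)), -(nn:ℝ)).2) * K p.1) - 1) * f x p.2)
            = -(∫ z, (Real.exp (-(nn:ℝ) * K z) - 1)) := by
          intro nn
          rw [hpz (-(nn:ℝ))]
          simp
        rw [funext heq]
        simpa using hDCT.neg
      rw [← ENNReal.ofReal_toReal hfin.ne]
      exact le_of_tendsto htt (Eventually.of_forall fun nn =>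
        le_iSup (fun w : EuclideanSpace ℝ (Fin q) × ℝ => ENNReal.ofReal
          ((inner ℝ w.1 (0 : EuclideanSpace ℝ (Fin q)) : ℝ) + w.2 * 0 -
            ∫ p : EuclideanSpace ℝ (Fin d) × EuclideanSpace ℝ (Fin q),
              (Real.exp (((inner ℝ w.1 p.2 : ℝ) + w.2) * K p.1) - 1) * f x p.2))
          ((0 : EuclideanSpace ℝ (Fin q)), -(nn:ℝ)))

/-- For a nonnegative kernel `K`, the Legendre transform `I_x` of `Ψ_x` satisfies
`I_x(0,0) = g(x)·λ(S₊)` where `S₊ = {K > 0}`, and `I_x(t₁,0) = ∞` for `t₁ ≠ 0`. -/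
theorem stmt6 (d q : ℕ)
    (K : EuclideanSpace ℝ (Fin d) → ℝ)
    (f : EuclideanSpace ℝ (Fin d) → EuclideanSpace ℝ (Fin q) → ℝ)
    (x : EuclideanSpace ℝ (Fin d))
    (hKmeas : Measurable K) (hKbdd : ∃ M : ℝ, ∀ z, |K z| ≤ M)
    (hKint : Integrable K) (hK1 : ∫ z, K z = 1)
    (hKnn : ∀ z, 0 ≤ K z)
    (hfmeas : Measurable (f x)) (hfnn : ∀ y, 0 ≤ f x y)
    (hfprob : ∫ y, f x y = 1)
    (hmom : ∀ (m ρ : ℝ), 0 ≤ m → 0 ≤ ρ →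
      Integrable (fun y : EuclideanSpace ℝ (Fin q) =>
        ‖y‖ ^ m * Real.exp (ρ * ‖y‖) * f x y))
    (hint : ∀ (u : EuclideanSpace ℝ (Fin q)) (v : ℝ),
      Integrable (fun p : EuclideanSpace ℝ (Fin d) × EuclideanSpace ℝ (Fin q) =>
        (Real.exp (((inner ℝ u p.2 : ℝ) + v) * K p.1) - 1) * f x p.2))
    (g : ℝ) (hg : g = ∫ y, f x y) (hgpos : 0 < g) :
    (⨆ w : EuclideanSpace ℝ (Fin q) × ℝ,
        ENNReal.ofReal ((inner ℝ w.1 (0 : EuclideanSpace ℝ (Fin q)) : ℝ) + w.2 * 0 -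
          ∫ p : EuclideanSpace ℝ (Fin d) × EuclideanSpace ℝ (Fin q),
            (Real.exp (((inner ℝ w.1 p.2 : ℝ) + w.2) * K p.1) - 1) * f x p.2))
      = ENNReal.ofReal g * volume {z | 0 < K z}
    ∧ ∀ t₁ : EuclideanSpace ℝ (Fin q), t₁ ≠ 0 →
      (⨆ w : EuclideanSpace ℝ (Fin q) × ℝ,
        ENNReal.ofReal ((inner ℝ w.1 t₁ : ℝ) + w.2 * 0 -
          ∫ p : EuclideanSpace ℝ (Fin d) × EuclideanSpace ℝ (Fin q),
            (Real.exp (((inner ℝ w.1 p.2 : ℝ) + w.2) * K p.1) - 1) * f x p.2)) = ⊤ := by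
  have hg1 : g = 1 := hg.trans hfprob
  constructor
  · rw [hg1, ENNReal.ofReal_one, one_mul]
    exact stmt6_part1 d q K f x hKmeas hKint hKnn hfnn hfprob hint
  · exact stmt6_part2 d q K f x hKbdd hKint hK1 hKnn hfnn hmom hint
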